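/- Let m ≥ 0, σ ∈ {−1,0,1} with m+σ ≥ 0, α > −1, and l,k ≥ 0 be integers. Then the spherinder basis functions Ψ^{σ,α}_{m,l,k} are orthonormal under the inner product ⟨f,g⟩ = 2^{−(2+α+1/2)}∫∫∫ f ḡ (1−η²)^α (1−t)^{α+1/2} dt dφ dη over t,η ∈ [−1,1], φ ∈ [0,2π): ⟨Ψ^{σ,α}_{m,l,k}, Ψ^{σ,α}_{m',l',k'}⟩ = δ_{mm'} δ_{ll'} δ_{kk'}. -/

import Mathlib

open Real MeasureTheory
noncomputable def gbinom (α : ℝ) (k : ℕ) : ℝ :=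
  (∏ i ∈ Finset.range k, (α - i)) / (Nat.factorial k)

noncomputable def jacobiP (n : ℕ) (a b : ℝ) (x : ℝ) : ℝ :=
  ∑ s ∈ Finset.range (n + 1),
    gbinom (n + a) (n - s) * gbinom (n + b) s * ((x - 1) / 2) ^ s * ((x + 1) / 2) ^ (n - s)

lemma gbinom_succ (x : ℝ) (k : ℕ) :
    ((k : ℝ) + 1) * gbinom x (k + 1) = (x - k) * gbinom x k := by
  unfold gbinom
  rw [Finset.prod_range_succ, Nat.factorial_succ]
  have h1 : (Nat.factorial k : ℝ) ≠ 0 := Nat.cast_ne_zero.mpr (Nat.factorial_ne_zero k)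
  have h2 : ((k + 1 : ℕ) : ℝ) ≠ 0 := Nat.cast_ne_zero.mpr (Nat.succ_ne_zero k)
  push_cast at h2 ⊢
  field_simp

noncomputable def jacobiDP (n : ℕ) (a b : ℝ) (x : ℝ) : ℝ :=
  ∑ s ∈ Finset.range (n + 1), gbinom (n + a) (n - s) * gbinom (n + b) s *
    (((s : ℝ) * ((x - 1) / 2) ^ (s - 1) * (1 / 2)) * ((x + 1) / 2) ^ (n - s)
      + ((x - 1) / 2) ^ s * (((n - s : ℕ) : ℝ) * ((x + 1) / 2) ^ (n - s - 1) * (1 / 2)))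

lemma hasDerivAt_jacobiP (n : ℕ) (a b : ℝ) (x : ℝ) :
    HasDerivAt (fun y => jacobiP n a b y) (jacobiDP n a b x) x := by
  unfold jacobiP jacobiDP
  apply HasDerivAt.fun_sum
  intro s _
  have hu : HasDerivAt (fun y : ℝ => (y - 1) / 2) (1 / 2) x :=
    ((hasDerivAt_id x).sub_const 1).div_const 2
  have hv : HasDerivAt (fun y : ℝ => (y + 1) / 2) (1 / 2) x :=
    ((hasDerivAt_id x).add_const 1).div_const 2
  have h1 := hu.pow s
  have h2 := hv.pow (n - s)
  have h3 := ((h1.const_mul (gbinom (n + a) (n - s) * gbinom (n + b) s)).mul h2)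
  refine h3.congr_deriv ?_
  simp only [Pi.pow_apply]
  ring

lemma cast_mul_pow_pred (w : ℝ) (s : ℕ) : (s : ℝ) * w ^ (s - 1) * w = (s : ℝ) * w ^ s := by
  cases s with
  | zero => simp
  | succ t => rw [pow_succ]; push_cast; ring

lemma gbinom_zero (x : ℝ) : gbinom x 0 = 1 := by simp [gbinom]

lemma sum_shift {M : Type*} [AddCommGroup M] (n : ℕ) (P Q G : ℕ → M)
    (h0 : P 0 = G 0) (hn : Q n = G (n + 1))
    (hmid : ∀ i, i < n → P (i + 1) + Q i = G (i + 1)) :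
    (∑ s ∈ Finset.range (n + 1), (P s + Q s)) = ∑ s ∈ Finset.range (n + 2), G s := by
  rw [Finset.sum_add_distrib, Finset.sum_range_succ' P n, Finset.sum_range_succ Q n,
    Finset.sum_range_succ G (n + 1), Finset.sum_range_succ' G n]
  have key : ∑ i ∈ Finset.range n, P (i + 1) + ∑ i ∈ Finset.range n, Q i
      = ∑ i ∈ Finset.range n, G (i + 1) := by
    rw [← Finset.sum_add_distrib]
    exact Finset.sum_congr rfl fun i hi => hmid i (Finset.mem_range.mp hi)
  rw [h0, hn, ← key]
  abel

lemma bracket_id (a b : ℝ) (n : ℕ) (x : ℝ) :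
    -((a + 1) * (1 + x)) * jacobiP n (a + 1) (b + 1) x
      + (b + 1) * (1 - x) * jacobiP n (a + 1) (b + 1) x
      + (1 - x) * (1 + x) * jacobiDP n (a + 1) (b + 1) x
    = -(2 * ((n : ℝ) + 1)) * jacobiP (n + 1) a b x := by
  set u : ℝ := (x - 1) / 2 with hu
  set v : ℝ := (x + 1) / 2 with hv
  have h1x : 1 + x = 2 * v := by rw [hv]; ring
  have h2x : 1 - x = -(2 * u) := by rw [hu]; ring
  set P : ℕ → ℝ := fun s =>
    (-2 * (gbinom (n + (a + 1)) (n - s) * gbinom (n + (b + 1)) s) * (a + 1 + s))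
      * (u ^ s * v ^ (n + 1 - s)) with hP
  set Q : ℕ → ℝ := fun s =>
    (-2 * (gbinom (n + (a + 1)) (n - s) * gbinom (n + (b + 1)) s) * (b + 1 + ((n - s : ℕ) : ℝ)))
      * (u ^ (s + 1) * v ^ (n - s)) with hQ
  set G : ℕ → ℝ := fun s =>
    -(2 * ((n : ℝ) + 1)) * (gbinom ((n + 1 : ℕ) + a) (n + 1 - s) * gbinom ((n + 1 : ℕ) + b) s
      * u ^ s * v ^ (n + 1 - s)) with hG
  have step1 : -((a + 1) * (1 + x)) * jacobiP n (a + 1) (b + 1) x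
      + (b + 1) * (1 - x) * jacobiP n (a + 1) (b + 1) x
      + (1 - x) * (1 + x) * jacobiDP n (a + 1) (b + 1) x
      = ∑ s ∈ Finset.range (n + 1), (P s + Q s) := by
    unfold jacobiP jacobiDP
    rw [Finset.mul_sum, Finset.mul_sum, Finset.mul_sum, ← Finset.sum_add_distrib,
      ← Finset.sum_add_distrib]
    refine Finset.sum_congr rfl fun s hs => ?_
    have hsn : s ≤ n := Nat.lt_succ_iff.mp (Finset.mem_range.mp hs)
    obtain ⟨r, rfl⟩ : ∃ r, n = s + r := ⟨n - s, by omega⟩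
    have e0 : s + r - s = r := by omega
    have e0' : s + r + 1 - s = r + 1 := by omega
    rw [hP, hQ]
    simp only [e0, e0']
    have e1 : (s : ℝ) * u ^ (s - 1) * u = s * u ^ s := cast_mul_pow_pred u s
    have e2 : (r : ℝ) * v ^ (r - 1) * v = r * v ^ r := cast_mul_pow_pred v r
    rw [h1x, h2x]
    linear_combination (-2 * (gbinom ((s + r : ℕ) + (a + 1)) r * gbinom ((s + r : ℕ) + (b + 1)) s)
        * v ^ r * v) * e1
      + (-2 * (gbinom ((s + r : ℕ) + (a + 1)) r * gbinom ((s + r : ℕ) + (b + 1)) s)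
        * u ^ s * u) * e2
  rw [step1]
  have step2 : jacobiP (n + 1) a b x = ∑ s ∈ Finset.range (n + 2), (gbinom ((n + 1 : ℕ) + a)
      (n + 1 - s) * gbinom ((n + 1 : ℕ) + b) s * u ^ s * v ^ (n + 1 - s)) := by
    unfold jacobiP; rfl
  rw [step2, Finset.mul_sum]
  apply sum_shift
  · -- P 0 = G 0
    simp only [hP, hG]
    simp only [Nat.sub_zero, gbinom_zero]
    have harg : ((n : ℝ) + (a + 1)) = ((n + 1 : ℕ) : ℝ) + a := by push_cast; ring
    rw [harg]
    have e1 := gbinom_succ (((n + 1 : ℕ) : ℝ) + a) n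
    set A1 := gbinom (((n + 1 : ℕ) : ℝ) + a) n
    set A2 := gbinom (((n + 1 : ℕ) : ℝ) + a) (n + 1)
    push_cast at e1 ⊢
    linear_combination (2 * u ^ 0 * v ^ (n + 1)) * e1
  · -- Q n = G (n+1)
    simp only [hQ, hG]
    simp only [Nat.sub_self, gbinom_zero]
    have harg : ((n : ℝ) + (b + 1)) = ((n + 1 : ℕ) : ℝ) + b := by push_cast; ring
    rw [harg]
    have e2 := gbinom_succ (((n + 1 : ℕ) : ℝ) + b) n
    set B1 := gbinom (((n + 1 : ℕ) : ℝ) + b) n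
    set B2 := gbinom (((n + 1 : ℕ) : ℝ) + b) (n + 1)
    push_cast at e2 ⊢
    linear_combination (2 * u ^ (n + 1) * v ^ 0) * e2
  · -- middle
    intro i hi
    obtain ⟨k, rfl⟩ : ∃ k, n = i + k + 1 := ⟨n - i - 1, by omega⟩
    simp only [hP, hQ, hG]
    have d1 : i + k + 1 - (i + 1) = k := by omega
    have d2 : i + k + 1 - i = k + 1 := by omega
    have d3 : i + k + 1 + 1 - (i + 1) = k + 1 := by omega
    simp only [d1, d2, d3]
    have harg1 : ((i + k + 1 : ℕ) : ℝ) + (a + 1) = ((i + k + 1 + 1 : ℕ) : ℝ) + a := by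
      push_cast; ring
    have harg2 : ((i + k + 1 : ℕ) : ℝ) + (b + 1) = ((i + k + 1 + 1 : ℕ) : ℝ) + b := by
      push_cast; ring
    rw [harg1, harg2]
    have e1 := gbinom_succ (((i + k + 1 + 1 : ℕ) : ℝ) + a) k
    have e2 := gbinom_succ (((i + k + 1 + 1 : ℕ) : ℝ) + b) i
    set A1 := gbinom (((i + k + 1 + 1 : ℕ) : ℝ) + a) k
    set A2 := gbinom (((i + k + 1 + 1 : ℕ) : ℝ) + a) (k + 1)
    set B1 := gbinom (((i + k + 1 + 1 : ℕ) : ℝ) + b) i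
    set B2 := gbinom (((i + k + 1 + 1 : ℕ) : ℝ) + b) (i + 1)
    push_cast at e1 e2 ⊢
    linear_combination ((2) * B2 * u ^ (i + 1) * v ^ (k + 1)) * e1
      + ((2) * A2 * u ^ (i + 1) * v ^ (k + 1)) * e2

lemma continuous_jacobiP (n : ℕ) (a b : ℝ) : Continuous (fun x => jacobiP n a b x) := by
  unfold jacobiP
  exact continuous_finset_sum _ fun s _ => by fun_prop

lemma hasDerivAt_G (a b : ℝ) (n : ℕ) (x : ℝ) (hx1 : 0 < 1 - x) (hx2 : 0 < 1 + x) :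
    HasDerivAt (fun y => (1 - y) ^ (a + 1) * (1 + y) ^ (b + 1) * jacobiP n (a + 1) (b + 1) y)
      (-(2 * ((n : ℝ) + 1)) * ((1 - x) ^ a * (1 + x) ^ b * jacobiP (n + 1) a b x)) x := by
  have hone : HasDerivAt (fun y : ℝ => 1 - y) (-1) x := by
    simpa using (hasDerivAt_id x).const_sub 1
  have htwo : HasDerivAt (fun y : ℝ => 1 + y) (1) x := by
    simpa using (hasDerivAt_id x).const_add 1
  have h1 : HasDerivAt (fun y : ℝ => (1 - y) ^ (a + 1))
      ((a + 1) * (1 - x) ^ a * (-1)) x := by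
    have h := (Real.hasDerivAt_rpow_const (x := 1 - x) (p := a + 1) (Or.inl hx1.ne')).comp x hone
    have ha : a + 1 - 1 = a := by ring
    simpa [ha, Function.comp_def] using h
  have h2 : HasDerivAt (fun y : ℝ => (1 + y) ^ (b + 1))
      ((b + 1) * (1 + x) ^ b * 1) x := by
    have h := (Real.hasDerivAt_rpow_const (x := 1 + x) (p := b + 1) (Or.inl hx2.ne')).comp x htwo
    have hb : b + 1 - 1 = b := by ring
    simpa [hb, Function.comp_def] using h
  have h3 := hasDerivAt_jacobiP n (a + 1) (b + 1) x
  have h := (h1.mul h2).mul h3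
  refine h.congr_deriv ?_
  symm
  simp only [Pi.mul_apply]
  have e1 : (1 - x) ^ (a + 1) = (1 - x) ^ a * (1 - x) := Real.rpow_add_one hx1.ne' a
  have e2 : (1 + x) ^ (b + 1) = (1 + x) ^ b * (1 + x) := Real.rpow_add_one hx2.ne' b
  rw [e1, e2]
  linear_combination (-((1 - x) ^ a * (1 + x) ^ b)) * bracket_id a b n x

noncomputable def jacobiPoly (n : ℕ) (a b : ℝ) : Polynomial ℝ :=
  ∑ s ∈ Finset.range (n + 1),
    Polynomial.C (gbinom (n + a) (n - s) * gbinom (n + b) s * (1 / 2) ^ s * (1 / 2) ^ (n - s)) *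
      (Polynomial.X - 1) ^ s * (Polynomial.X + 1) ^ (n - s)

lemma jacobiPoly_eval (n : ℕ) (a b x : ℝ) : (jacobiPoly n a b).eval x = jacobiP n a b x := by
  unfold jacobiPoly jacobiP
  rw [Polynomial.eval_finset_sum]
  refine Finset.sum_congr rfl fun s _ => ?_
  simp [div_pow]
  ring

lemma jacobiPoly_natDegree_le (n : ℕ) (a b : ℝ) : (jacobiPoly n a b).natDegree ≤ n := by
  unfold jacobiPoly
  apply Polynomial.natDegree_sum_le_of_forall_le
  intro s hs
  have hsn : s ≤ n := Nat.lt_succ_iff.mp (Finset.mem_range.mp hs)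
  calc (Polynomial.C (gbinom (n + a) (n - s) * gbinom (n + b) s * (1 / 2) ^ s * (1 / 2) ^ (n - s)) *
      (Polynomial.X - 1) ^ s * (Polynomial.X + 1) ^ (n - s)).natDegree
      ≤ (Polynomial.C (gbinom (n + a) (n - s) * gbinom (n + b) s * (1 / 2) ^ s * (1 / 2) ^ (n - s)) *
        (Polynomial.X - 1) ^ s).natDegree + ((Polynomial.X + 1) ^ (n - s) :
          Polynomial ℝ).natDegree := Polynomial.natDegree_mul_le
    _ ≤ ((Polynomial.C (gbinom (n + a) (n - s) * gbinom (n + b) s * (1 / 2) ^ s *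
          (1 / 2) ^ (n - s)) : Polynomial ℝ).natDegree
          + ((Polynomial.X - 1) ^ s : Polynomial ℝ).natDegree)
          + ((Polynomial.X + 1) ^ (n - s) : Polynomial ℝ).natDegree := by
        gcongr; exact Polynomial.natDegree_mul_le
    _ ≤ (0 + s * 1) + (n - s) * 1 := by
        gcongr
        · rw [Polynomial.natDegree_C]
        · exact (Polynomial.natDegree_pow_le).trans (by
            gcongr
            exact le_of_eq (by simpa using Polynomial.natDegree_X_sub_C (1 : ℝ)))
        · exact (Polynomial.natDegree_pow_le).trans (by
            gcongr
            have : (Polynomial.X + 1 : Polynomial ℝ) = Polynomial.X - Polynomial.C (-1) := by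
              simp [sub_neg_eq_add]
            rw [this]
            exact le_of_eq (Polynomial.natDegree_X_sub_C (-1 : ℝ)))
    _ ≤ n := by omega

lemma jacobiP_one_pos (n : ℕ) (a b : ℝ) (ha : -1 < a) : 0 < jacobiP n a b 1 := by
  unfold jacobiP
  rw [Finset.sum_eq_single 0]
  · simp only [Nat.sub_zero, pow_zero]
    have h1 : gbinom (n + b) 0 = 1 := gbinom_zero _
    rw [h1]
    have : ((1 : ℝ) + 1) / 2 = 1 := by norm_num
    rw [this, one_pow]
    have : gbinom (n + a) n > 0 := by
      unfold gbinom
      apply div_pos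
      · apply Finset.prod_pos
        intro i hi
        have : (i : ℝ) + 1 ≤ n := by exact_mod_cast Finset.mem_range.mp hi
        linarith
      · exact_mod_cast Nat.factorial_pos n
    linarith [this]
  · intro s _ hs
    have : ((1 : ℝ) - 1) / 2 = 0 := by norm_num
    rw [this, zero_pow hs]
    ring
  · intro h
    exact absurd (Finset.mem_range.mpr (Nat.succ_pos n)) h

lemma jacobiPoly_ne_zero (n : ℕ) (a b : ℝ) (ha : -1 < a) : jacobiPoly n a b ≠ 0 := by
  intro h
  have := jacobiP_one_pos n a b ha
  rw [← jacobiPoly_eval, h] at this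
  simp at this

/-- weight times continuous function is interval integrable -/
lemma weight_mul_integrable (a b : ℝ) (ha : -1 < a) (hb : -1 < b) (f : ℝ → ℝ)
    (hf : Continuous f) :
    IntervalIntegrable (fun t => (1 - t) ^ a * (1 + t) ^ b * f t) volume (-1 : ℝ) 1 := by
  have key : ∀ (g : ℝ → ℝ), Continuous g →
      IntervalIntegrable (fun t => (1 + t) ^ b * g t) volume (-1 : ℝ) 0 := by
    intro g hg
    apply IntervalIntegrable.mul_continuousOn
    · have h0 : IntervalIntegrable (fun x : ℝ => x ^ b) volume 0 1 :=
        intervalIntegral.intervalIntegrable_rpow' hb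
      have := h0.comp_sub_right (-1)
      simpa [add_comm] using this
    · exact hg.continuousOn
  have key2 : ∀ (g : ℝ → ℝ), Continuous g →
      IntervalIntegrable (fun t => (1 - t) ^ a * g t) volume (0 : ℝ) 1 := by
    intro g hg
    apply IntervalIntegrable.mul_continuousOn
    · have h0 : IntervalIntegrable (fun x : ℝ => x ^ a) volume 0 1 :=
        intervalIntegral.intervalIntegrable_rpow' ha
      have := (h0.comp_sub_left 1).symm
      simpa using this
    · exact hg.continuousOn
  have hleft : IntervalIntegrable (fun t => (1 - t) ^ a * (1 + t) ^ b * f t) volume (-1 : ℝ) 0 := by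
    have heq : (fun t : ℝ => (1 - t) ^ a * (1 + t) ^ b * f t)
        = fun t => (1 + t) ^ b * ((1 - t) ^ a * f t) := by funext t; ring
    rw [heq]
    apply IntervalIntegrable.mul_continuousOn
    · have h0 : IntervalIntegrable (fun x : ℝ => x ^ b) volume 0 1 :=
        intervalIntegral.intervalIntegrable_rpow' hb
      have := h0.comp_sub_right (-1)
      simpa [add_comm] using this
    · apply ContinuousOn.mul _ hf.continuousOn
      intro t ht
      rw [Set.uIcc_of_le (by norm_num : (-1:ℝ) ≤ 0)] at ht
      have hne : (1 : ℝ) - t ≠ 0 := by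
        have := ht.2; intro h; nlinarith [ht.1]
      exact ((Real.continuousAt_rpow_const (1 - t) a (Or.inl hne)).comp
        ((continuous_const.sub continuous_id).continuousAt)).continuousWithinAt
  have hright : IntervalIntegrable (fun t => (1 - t) ^ a * (1 + t) ^ b * f t) volume (0 : ℝ) 1 := by
    have heq : (fun t : ℝ => (1 - t) ^ a * (1 + t) ^ b * f t)
        = fun t => (1 - t) ^ a * ((1 + t) ^ b * f t) := by funext t; ring
    rw [heq]
    apply IntervalIntegrable.mul_continuousOn
    · have h0 : IntervalIntegrable (fun x : ℝ => x ^ a) volume 0 1 :=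
        intervalIntegral.intervalIntegrable_rpow' ha
      have := (h0.comp_sub_left 1).symm
      simpa using this
    · apply ContinuousOn.mul _ hf.continuousOn
      intro t ht
      rw [Set.uIcc_of_le (by norm_num : (0:ℝ) ≤ 1)] at ht
      have hne : (1 : ℝ) + t ≠ 0 := by
        have := ht.1; intro h; nlinarith
      exact ((Real.continuousAt_rpow_const (1 + t) b (Or.inl hne)).comp
        ((continuous_const.add continuous_id).continuousAt)).continuousWithinAt
  exact hleft.trans hright

lemma degree_deriv_helper {q : Polynomial ℝ} {n : ℕ} (hq0 : q ≠ 0)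
    (hq : q.degree < ((n + 1 : ℕ) : WithBot ℕ)) :
    q.derivative.degree < (n : WithBot ℕ) := by
  have h1 : q.derivative.degree < q.degree := Polynomial.degree_derivative_lt hq0
  rw [Polynomial.degree_eq_natDegree hq0] at hq h1
  have h2 : q.natDegree < n + 1 := by exact_mod_cast hq
  have h3 : (q.natDegree : WithBot ℕ) ≤ (n : WithBot ℕ) := by
    exact_mod_cast Nat.lt_succ_iff.mp h2
  exact lt_of_lt_of_le h1 h3

lemma jacobi_orth (n : ℕ) : ∀ (a b : ℝ), -1 < a → -1 < b → ∀ q : Polynomial ℝ,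
    q.degree < (n : WithBot ℕ) →
    (∫ t in (-1:ℝ)..1, (1 - t) ^ a * (1 + t) ^ b * (jacobiP n a b t * q.eval t)) = 0 := by
  induction n with
  | zero =>
    intro a b ha hb q hq
    have hq0 : q = 0 := by
      by_contra h
      rw [Polynomial.degree_eq_natDegree h] at hq
      exact absurd (by exact_mod_cast hq) (Nat.not_lt_zero q.natDegree)
    subst hq0
    simp
  | succ n ih =>
    intro a b ha hb q hq
    by_cases hq0 : q = 0
    · subst hq0; simp
    have ha1 : (0:ℝ) < a + 1 := by linarith
    have hb1 : (0:ℝ) < b + 1 := by linarith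
    set G : ℝ → ℝ := fun y => (1 - y) ^ (a+1) * (1 + y) ^ (b+1) * jacobiP n (a+1) (b+1) y
      with hGdef
    have hGcont : Continuous G := by
      apply Continuous.mul
      apply Continuous.mul
      · exact continuous_iff_continuousAt.mpr fun x =>
          ((Real.continuousAt_rpow_const (1 - x) (a+1) (Or.inr ha1.le)).comp
            ((continuous_const.sub continuous_id).continuousAt))
      · exact continuous_iff_continuousAt.mpr fun x =>
          ((Real.continuousAt_rpow_const (1 + x) (b+1) (Or.inr hb1.le)).comp
            ((continuous_const.add continuous_id).continuousAt))
      · exact continuous_jacobiP n (a+1) (b+1)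
    set F1 : ℝ → ℝ := fun y => (-(2 * ((n:ℝ)+1))) *
      ((1 - y) ^ a * (1 + y) ^ b * (jacobiP (n+1) a b y * q.eval y)) with hF1def
    set F2 : ℝ → ℝ := fun y => G y * q.derivative.eval y with hF2def
    have hF1int : IntervalIntegrable F1 volume (-1) 1 := by
      have h := (weight_mul_integrable a b ha hb
        (fun y => (-(2 * ((n:ℝ)+1))) * (jacobiP (n+1) a b y * q.eval y))
        (by exact continuous_const.mul ((continuous_jacobiP _ _ _).mul q.continuous)))
      have heq : F1 = fun t => (1 - t) ^ a * (1 + t) ^ b *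
          ((-(2 * ((n:ℝ)+1))) * (jacobiP (n+1) a b t * q.eval t)) := by
        funext t; rw [hF1def]; ring
      rw [heq]; exact h
    have hF2int : IntervalIntegrable F2 volume (-1) 1 :=
      (hGcont.mul q.derivative.continuous).intervalIntegrable _ _
    have hderiv : ∀ x ∈ Set.Ioo (-1:ℝ) 1,
        HasDerivWithinAt (fun y => G y * q.eval y) (F1 x + F2 x) (Set.Ioi x) x := by
      intro x hx
      have h := (hasDerivAt_G a b n x (by linarith [hx.2]) (by linarith [hx.1])).mul
        (q.hasDerivAt x)
      have heq : -(2 * ((n : ℝ) + 1)) * ((1 - x) ^ a * (1 + x) ^ b * jacobiP (n + 1) a b x) *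
          q.eval x + G x * q.derivative.eval x = F1 x + F2 x := by
        rw [hF1def, hF2def]; ring
      rw [heq] at h
      exact h.hasDerivWithinAt
    have hcont : ContinuousOn (fun y => G y * q.eval y) (Set.Icc (-1:ℝ) 1) :=
      (hGcont.mul q.continuous).continuousOn
    have hFTC := intervalIntegral.integral_eq_sub_of_hasDeriv_right_of_le
      (by norm_num : (-1:ℝ) ≤ 1) hcont hderiv (hF1int.add hF2int)
    have hG1 : G 1 = 0 := by
      rw [hGdef]
      simp [Real.zero_rpow (ne_of_gt ha1)]
    have hGm1 : G (-1) = 0 := by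
      rw [hGdef]
      simp [Real.zero_rpow (ne_of_gt hb1)]
    rw [hG1, hGm1] at hFTC
    simp only [zero_mul, sub_zero, sub_self] at hFTC
    rw [intervalIntegral.integral_add hF1int hF2int] at hFTC
    have hI2 : ∫ y in (-1:ℝ)..1, F2 y = 0 := by
      have heq : F2 = fun y => (1 - y) ^ (a+1) * (1 + y) ^ (b+1) *
          (jacobiP n (a+1) (b+1) y * q.derivative.eval y) := by
        funext y; rw [hF2def, hGdef]; ring
      rw [heq]
      exact ih (a+1) (b+1) (by linarith) (by linarith) q.derivative
        (degree_deriv_helper hq0 hq)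
    rw [hI2, add_zero, hF1def] at hFTC
    rw [intervalIntegral.integral_const_mul] at hFTC
    have hc : (-(2 * ((n:ℝ)+1))) ≠ 0 := by
      have : (0:ℝ) < (n:ℝ) + 1 := by positivity
      intro h; nlinarith
    exact (mul_eq_zero.mp hFTC).resolve_left hc

lemma jacobi_orth_ne (a b : ℝ) (ha : -1 < a) (hb : -1 < b) {n n' : ℕ} (h : n' ≠ n) :
    (∫ t in (-1:ℝ)..1, (1 - t) ^ a * (1 + t) ^ b * (jacobiP n a b t * jacobiP n' a b t)) = 0 := by
  rcases Nat.lt_or_ge n' n with hlt | hge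
  · have hdeg : (jacobiPoly n' a b).degree < (n : WithBot ℕ) := by
      have h1 : (jacobiPoly n' a b).degree ≤ (n' : WithBot ℕ) :=
        Polynomial.natDegree_le_iff_degree_le.mp (jacobiPoly_natDegree_le n' a b)
      have h2 : (n' : WithBot ℕ) < (n : WithBot ℕ) := by exact_mod_cast hlt
      exact lt_of_le_of_lt h1 h2
    have := jacobi_orth n a b ha hb (jacobiPoly n' a b) hdeg
    simpa only [jacobiPoly_eval] using this
  · have hlt : n < n' := lt_of_le_of_ne hge (Ne.symm h)
    have hdeg : (jacobiPoly n a b).degree < (n' : WithBot ℕ) := by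
      have h1 : (jacobiPoly n a b).degree ≤ (n : WithBot ℕ) :=
        Polynomial.natDegree_le_iff_degree_le.mp (jacobiPoly_natDegree_le n a b)
      have h2 : (n : WithBot ℕ) < (n' : WithBot ℕ) := by exact_mod_cast hlt
      exact lt_of_le_of_lt h1 h2
    have h0 := jacobi_orth n' a b ha hb (jacobiPoly n a b) hdeg
    simp only [jacobiPoly_eval] at h0
    rw [← h0]
    apply intervalIntegral.integral_congr
    intro t _
    ring

noncomputable def jacobiNormSq (n : ℕ) (a b : ℝ) : ℝ :=
  ∫ t in (-1 : ℝ)..1, (1 - t) ^ a * (1 + t) ^ b * (jacobiP n a b t) ^ 2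

noncomputable def jacobiPn (n : ℕ) (a b : ℝ) (x : ℝ) : ℝ :=
  jacobiP n a b x / Real.sqrt (jacobiNormSq n a b)

lemma jacobiNormSq_pos (n : ℕ) (a b : ℝ) (ha : -1 < a) (hb : -1 < b) :
    0 < jacobiNormSq n a b := by
  unfold jacobiNormSq
  set f : ℝ → ℝ := fun t => (1 - t) ^ a * (1 + t) ^ b * (jacobiP n a b t) ^ 2 with hf
  have hint : IntervalIntegrable f volume (-1) 1 :=
    weight_mul_integrable a b ha hb _ ((continuous_jacobiP n a b).pow 2)
  have hnonneg : 0 ≤ᵐ[volume.restrict (Set.uIoc (-1:ℝ) 1)] f := by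
    rw [Set.uIoc_of_le (by norm_num : (-1:ℝ) ≤ 1)]
    refine (ae_restrict_iff' measurableSet_Ioc).mpr (ae_of_all _ ?_)
    intro t ht
    have h1 : 0 ≤ 1 - t := by linarith [ht.2]
    have h2 : 0 ≤ 1 + t := by linarith [ht.1]
    have := Real.rpow_nonneg h1 a
    have := Real.rpow_nonneg h2 b
    positivity
  rw [show (∫ t in (-1:ℝ)..1, (1 - t) ^ a * (1 + t) ^ b * (jacobiP n a b t) ^ 2)
      = ∫ t in (-1:ℝ)..1, f t from rfl]
  apply (intervalIntegral.integral_pos_iff_support_of_nonneg_ae' hnonneg hint).mpr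
  refine ⟨by norm_num, ?_⟩
  have hroots : Set.Finite {x | (jacobiPoly n a b).IsRoot x} :=
    Polynomial.finite_setOf_isRoot (jacobiPoly_ne_zero n a b ha)
  have hsub : Set.Ioo (-1:ℝ) 1 \ {x | (jacobiPoly n a b).IsRoot x}
      ⊆ Function.support f ∩ Set.Ioc (-1:ℝ) 1 := by
    rintro x ⟨hx, hnr⟩
    constructor
    · have h1 : 0 < 1 - x := by linarith [hx.2]
      have h2 : 0 < 1 + x := by linarith [hx.1]
      have h3 : jacobiP n a b x ≠ 0 := by
        intro hz
        exact hnr (by simpa [Polynomial.IsRoot, jacobiPoly_eval] using hz)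
      have : 0 < f x := by
        rw [hf]
        have := Real.rpow_pos_of_pos h1 a
        have := Real.rpow_pos_of_pos h2 b
        positivity
      exact this.ne'
    · exact ⟨hx.1, hx.2.le⟩
  calc (0:ENNReal) < volume (Set.Ioo (-1:ℝ) 1 \ {x | (jacobiPoly n a b).IsRoot x}) := by
        rw [measure_diff_null (hroots.measure_zero volume)]
        rw [Real.volume_Ioo]
        apply ENNReal.ofReal_pos.mpr
        norm_num
    _ ≤ volume (Function.support f ∩ Set.Ioc (-1:ℝ) 1) := measure_mono hsub

lemma jacobiPn_orthonormal (a b : ℝ) (ha : -1 < a) (hb : -1 < b) (n n' : ℕ) :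
    (∫ t in (-1:ℝ)..1, (1 - t) ^ a * (1 + t) ^ b * (jacobiPn n a b t * jacobiPn n' a b t))
      = if n = n' then 1 else 0 := by
  have hpos := jacobiNormSq_pos n a b ha hb
  have hpos' := jacobiNormSq_pos n' a b ha hb
  unfold jacobiPn
  have heq : (fun t => (1 - t) ^ a * (1 + t) ^ b *
      (jacobiP n a b t / Real.sqrt (jacobiNormSq n a b) *
        (jacobiP n' a b t / Real.sqrt (jacobiNormSq n' a b))))
      = fun t => ((1 - t) ^ a * (1 + t) ^ b * (jacobiP n a b t * jacobiP n' a b t)) *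
        (1 / (Real.sqrt (jacobiNormSq n a b) * Real.sqrt (jacobiNormSq n' a b))) := by
    funext t; ring
  rw [heq, intervalIntegral.integral_mul_const]
  by_cases h : n = n'
  · subst h
    rw [if_pos rfl]
    have hN : (∫ t in (-1:ℝ)..1, (1 - t) ^ a * (1 + t) ^ b *
        (jacobiP n a b t * jacobiP n a b t)) = jacobiNormSq n a b := by
      unfold jacobiNormSq
      apply intervalIntegral.integral_congr
      intro t _
      ring
    rw [hN, Real.mul_self_sqrt hpos.le]
    field_simp
  · rw [if_neg h, jacobi_orth_ne a b ha hb (fun hh => h hh.symm), zero_mul]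

noncomputable def Nalpha (α : ℝ) : ℝ := Real.sqrt (2 * Real.pi / 2 ^ (2 + α + 1 / 2))

noncomputable def Psi (σ : ℤ) (α : ℝ) (m : ℤ) (l k : ℕ) (t η φ : ℝ) : ℂ :=
  (1 / (Nalpha α : ℂ)) * Complex.exp (Complex.I * m * φ) *
    ((1 + t) ^ (((|m| + σ : ℤ) : ℝ) / 2) : ℝ) * ((1 - t) ^ ((l : ℝ) / 2) : ℝ) *
    (jacobiPn l α α η : ℝ) * (jacobiPn k (l + α + 1 / 2) ((|m| + σ : ℤ) : ℝ) t : ℝ)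

lemma phi_integral (m m' : ℤ) :
    (∫ φ in (0:ℝ)..(2 * Real.pi), Complex.exp (Complex.I * ((m : ℂ) - (m' : ℂ)) * (φ : ℝ)))
      = if m = m' then ((2 * Real.pi : ℝ) : ℂ) else 0 := by
  by_cases h : m = m'
  · subst h
    simp only [sub_self, mul_zero, zero_mul, Complex.exp_zero, if_pos rfl]
    rw [intervalIntegral.integral_const]
    simp
  · rw [if_neg h]
    have hne : ((m : ℂ) - (m' : ℂ)) ≠ 0 := by
      intro hc
      apply h
      have : (m : ℂ) = (m' : ℂ) := by linear_combination hc
      exact_mod_cast this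
    have hc : Complex.I * ((m : ℂ) - (m' : ℂ)) ≠ 0 := mul_ne_zero Complex.I_ne_zero hne
    rw [integral_exp_mul_complex hc]
    have h2 : Complex.I * ((m : ℂ) - (m' : ℂ)) * ((2 * Real.pi : ℝ) : ℂ)
        = ((m - m' : ℤ) : ℂ) * (2 * (Real.pi : ℂ) * Complex.I) := by push_cast; ring
    have h0 : Complex.I * ((m : ℂ) - (m' : ℂ)) * ((0 : ℝ) : ℂ) = 0 := by push_cast; ring
    rw [h2, h0, Complex.exp_int_mul_two_pi_mul_I, Complex.exp_zero]
    simp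

lemma rpow_half_half (x p : ℝ) (hx : 0 ≤ x) (hp : 0 ≤ p) :
    x ^ (p / 2) * x ^ (p / 2) = x ^ p := by
  rcases eq_or_lt_of_le hp with h | h
  · rw [← h]; norm_num
  · have hne : p / 2 + p / 2 ≠ 0 := by intro hc; nlinarith
    rw [← Real.rpow_add' hx hne]
    norm_num

lemma rpow_nat_mul_rpow (x : ℝ) (hx : 0 ≤ x) (l : ℕ) (c : ℝ) (hc : -1 < c) :
    x ^ (l : ℝ) * x ^ c = x ^ ((l : ℝ) + c) := by
  cases l with
  | zero => simp
  | succ j =>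
    have hne : ((j + 1 : ℕ) : ℝ) + c ≠ 0 := by
      push_cast
      have : (0:ℝ) ≤ j := Nat.cast_nonneg j
      intro hcc; nlinarith
    rw [Real.rpow_add' hx hne]

noncomputable def GG (α : ℝ) (l l' : ℕ) (η : ℝ) : ℝ :=
  jacobiPn l α α η * jacobiPn l' α α η * (1 - η ^ 2) ^ α

noncomputable def FF (α μ1 μ2 : ℝ) (l l' k k' : ℕ) (t : ℝ) : ℝ :=
  (1 + t) ^ (μ1 / 2) * (1 + t) ^ (μ2 / 2) * (1 - t) ^ ((l : ℝ) / 2) * (1 - t) ^ ((l' : ℝ) / 2) *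
    jacobiPn k ((l : ℝ) + α + 1 / 2) μ1 t * jacobiPn k' ((l' : ℝ) + α + 1 / 2) μ2 t *
    (1 - t) ^ (α + 1 / 2)

lemma psi_mul_conj (σ : ℤ) (α : ℝ) (m m' : ℤ) (l l' k k' : ℕ) (t η φ : ℝ) :
    Psi σ α m l k t η φ * (starRingEnd ℂ) (Psi σ α m' l' k' t η φ)
      * (((1 - η ^ 2) ^ α : ℝ) : ℂ) * (((1 - t) ^ (α + 1 / 2) : ℝ) : ℂ)
    = Complex.exp (Complex.I * ((m : ℂ) - (m' : ℂ)) * (φ : ℝ)) *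
        ((GG α l l' η : ℝ) : ℂ) *
        ((FF α ((|m| + σ : ℤ) : ℝ) ((|m'| + σ : ℤ) : ℝ) l l' k k' t : ℝ) : ℂ) *
        ((1 / (Nalpha α) ^ 2 : ℝ) : ℂ) := by
  have hexp : Complex.exp (Complex.I * (m : ℂ) * (φ : ℝ)) *
      Complex.exp (-(Complex.I * (m' : ℂ) * (φ : ℝ)))
      = Complex.exp (Complex.I * ((m : ℂ) - (m' : ℂ)) * (φ : ℝ)) := by
    rw [← Complex.exp_add]; congr 1; ring
  simp only [Psi, GG, FF, map_mul, map_one, map_div₀, Complex.conj_ofReal,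
    ← Complex.exp_conj, Complex.conj_I, map_intCast]
  rw [← hexp]
  push_cast
  ring

/-- For `m, m' ≥ 0`, `σ ∈ {−1,0,1}` with `m+σ ≥ 0`, `m'+σ ≥ 0`, and
`α > −1`, the spherinder basis functions are orthonormal under the inner product
`⟨f,g⟩ = 2^{−(2+α+1/2)} ∫∫∫ f ḡ (1−η²)^α (1−t)^{α+1/2} dt dφ dη`
over `t, η ∈ [−1,1]`, `φ ∈ [0,2π)`. -/
theorem spherinder_basis_orthonormal (α : ℝ) (hα : α > -1)
    (σ : ℤ) (hσ : σ = -1 ∨ σ = 0 ∨ σ = 1)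
    (m m' : ℤ) (hm : 0 ≤ m) (hm' : 0 ≤ m') (hms : 0 ≤ m + σ) (hms' : 0 ≤ m' + σ)
    (l l' k k' : ℕ) :
    (1 / ((2 : ℝ) ^ (2 + α + 1 / 2) : ℝ) : ℂ) *
      ∫ η in (-1 : ℝ)..1, ∫ φ in (0 : ℝ)..(2 * Real.pi), ∫ t in (-1 : ℝ)..1,
        Psi σ α m l k t η φ * (starRingEnd ℂ) (Psi σ α m' l' k' t η φ) *
          (((1 - η ^ 2) ^ α : ℝ) : ℂ) * (((1 - t) ^ (α + 1 / 2) : ℝ) : ℂ)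
      = if m = m' ∧ l = l' ∧ k = k' then 1 else 0 := by
  have hπ := Real.pi_pos
  have hc0 : (0:ℝ) < (2:ℝ) ^ (2 + α + 1 / 2) := Real.rpow_pos_of_pos two_pos _
  have hNA2 : (Nalpha α) ^ 2 = 2 * Real.pi / 2 ^ (2 + α + 1 / 2) := by
    rw [Nalpha, Real.sq_sqrt (by positivity)]
  have hμ1n : (0:ℝ) ≤ ((|m| + σ : ℤ) : ℝ) := by
    have h0 : (0:ℤ) ≤ |m| + σ := by rw [abs_of_nonneg hm]; exact hms
    exact_mod_cast h0
  have hμ2n : (0:ℝ) ≤ ((|m'| + σ : ℤ) : ℝ) := by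
    have h0 : (0:ℤ) ≤ |m'| + σ := by rw [abs_of_nonneg hm']; exact hms'
    exact_mod_cast h0
  set IF : ℝ := ∫ t in (-1:ℝ)..1, FF α ((|m| + σ : ℤ) : ℝ) ((|m'| + σ : ℤ) : ℝ) l l' k k' t
    with hIFdef
  set IG : ℝ := ∫ η in (-1:ℝ)..1, GG α l l' η with hIGdef
  have hInner : ∀ η φ : ℝ,
      (∫ t in (-1:ℝ)..1, Psi σ α m l k t η φ * (starRingEnd ℂ) (Psi σ α m' l' k' t η φ) *
        (((1 - η ^ 2) ^ α : ℝ) : ℂ) * (((1 - t) ^ (α + 1 / 2) : ℝ) : ℂ))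
      = Complex.exp (Complex.I * ((m:ℂ) - (m':ℂ)) * (φ:ℝ)) * ((GG α l l' η : ℝ) : ℂ) *
        ((IF : ℝ) : ℂ) * ((1 / (Nalpha α) ^ 2 : ℝ) : ℂ) := by
    intro η φ
    rw [show (fun t : ℝ => Psi σ α m l k t η φ * (starRingEnd ℂ) (Psi σ α m' l' k' t η φ) *
        (((1 - η ^ 2) ^ α : ℝ) : ℂ) * (((1 - t) ^ (α + 1 / 2) : ℝ) : ℂ))
        = fun t : ℝ => (Complex.exp (Complex.I * ((m:ℂ) - (m':ℂ)) * (φ:ℝ)) *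
          ((GG α l l' η : ℝ) : ℂ) * ((1 / (Nalpha α) ^ 2 : ℝ) : ℂ)) *
          ((FF α ((|m| + σ : ℤ) : ℝ) ((|m'| + σ : ℤ) : ℝ) l l' k k' t : ℝ) : ℂ)
      from funext fun t => by rw [psi_mul_conj]; ring]
    rw [intervalIntegral.integral_const_mul, intervalIntegral.integral_ofReal, ← hIFdef]
    ring
  simp only [hInner]
  have hMid : ∀ η : ℝ,
      (∫ φ in (0:ℝ)..(2 * Real.pi),
        Complex.exp (Complex.I * ((m:ℂ) - (m':ℂ)) * (φ:ℝ)) * ((GG α l l' η : ℝ) : ℂ) *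
          ((IF : ℝ) : ℂ) * ((1 / (Nalpha α) ^ 2 : ℝ) : ℂ))
      = (if m = m' then ((2 * Real.pi : ℝ) : ℂ) else 0) * ((GG α l l' η : ℝ) : ℂ) *
          ((IF : ℝ) : ℂ) * ((1 / (Nalpha α) ^ 2 : ℝ) : ℂ) := by
    intro η
    rw [show (fun φ : ℝ => Complex.exp (Complex.I * ((m:ℂ) - (m':ℂ)) * (φ:ℝ)) *
        ((GG α l l' η : ℝ) : ℂ) * ((IF : ℝ) : ℂ) * ((1 / (Nalpha α) ^ 2 : ℝ) : ℂ))
        = fun φ : ℝ => Complex.exp (Complex.I * ((m:ℂ) - (m':ℂ)) * (φ:ℝ)) *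
          (((GG α l l' η : ℝ) : ℂ) * ((IF : ℝ) : ℂ) * ((1 / (Nalpha α) ^ 2 : ℝ) : ℂ))
      from funext fun φ => by ring]
    rw [intervalIntegral.integral_mul_const, phi_integral m m']
    ring
  simp only [hMid]
  rw [show (fun η : ℝ => (if m = m' then ((2 * Real.pi : ℝ) : ℂ) else 0) *
      ((GG α l l' η : ℝ) : ℂ) * ((IF : ℝ) : ℂ) * ((1 / (Nalpha α) ^ 2 : ℝ) : ℂ))
      = fun η : ℝ => ((GG α l l' η : ℝ) : ℂ) * ((if m = m' then ((2 * Real.pi : ℝ) : ℂ) else 0) *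
        ((IF : ℝ) : ℂ) * ((1 / (Nalpha α) ^ 2 : ℝ) : ℂ))
    from funext fun η => by ring]
  rw [intervalIntegral.integral_mul_const, intervalIntegral.integral_ofReal, ← hIGdef]
  by_cases hmm : m = m'
  · subst hmm
    have hIGval : IG = if l = l' then 1 else 0 := by
      rw [hIGdef, ← jacobiPn_orthonormal α α hα hα l l']
      apply intervalIntegral.integral_congr
      intro η hη
      rw [Set.uIcc_of_le (by norm_num : (-1:ℝ) ≤ 1)] at hη
      have h1 : (0:ℝ) ≤ 1 - η := by linarith [hη.2]
      have h2 : (0:ℝ) ≤ 1 + η := by linarith [hη.1]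
      simp only [GG]
      rw [show (1 - η ^ 2 : ℝ) = (1 - η) * (1 + η) by ring, Real.mul_rpow h1 h2]
      ring
    by_cases hll : l = l'
    · subst hll
      have hIFval : IF = if k = k' then 1 else 0 := by
        rw [hIFdef, ← jacobiPn_orthonormal ((l:ℝ) + α + 1 / 2) (((|m| + σ : ℤ) : ℝ))
          (by have := Nat.cast_nonneg (α := ℝ) l; linarith) (by linarith) k k']
        apply intervalIntegral.integral_congr
        intro t ht
        rw [Set.uIcc_of_le (by norm_num : (-1:ℝ) ≤ 1)] at ht
        have h1 : (0:ℝ) ≤ 1 - t := by linarith [ht.2]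
        have h2 : (0:ℝ) ≤ 1 + t := by linarith [ht.1]
        simp only [FF]
        have e1 := rpow_half_half (1 + t) (((|m| + σ : ℤ) : ℝ)) h2 hμ1n
        have e2 := rpow_half_half (1 - t) (l : ℝ) h1 (Nat.cast_nonneg l)
        have e3 := rpow_nat_mul_rpow (1 - t) h1 l (α + 1 / 2) (by linarith)
        rw [show ((l:ℝ) + (α + 1 / 2)) = (l:ℝ) + α + 1 / 2 by ring] at e3
        calc (1 + t) ^ (((|m| + σ : ℤ) : ℝ) / 2) * (1 + t) ^ (((|m| + σ : ℤ) : ℝ) / 2) *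
              (1 - t) ^ ((l : ℝ) / 2) * (1 - t) ^ ((l : ℝ) / 2) *
              jacobiPn k ((l : ℝ) + α + 1 / 2) (((|m| + σ : ℤ) : ℝ)) t *
              jacobiPn k' ((l : ℝ) + α + 1 / 2) (((|m| + σ : ℤ) : ℝ)) t * (1 - t) ^ (α + 1 / 2)
            = ((1 + t) ^ (((|m| + σ : ℤ) : ℝ) / 2) * (1 + t) ^ (((|m| + σ : ℤ) : ℝ) / 2)) *
              (((1 - t) ^ ((l : ℝ) / 2) * (1 - t) ^ ((l : ℝ) / 2)) * (1 - t) ^ (α + 1 / 2)) *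
              (jacobiPn k ((l : ℝ) + α + 1 / 2) (((|m| + σ : ℤ) : ℝ)) t *
                jacobiPn k' ((l : ℝ) + α + 1 / 2) (((|m| + σ : ℤ) : ℝ)) t) := by ring
          _ = (1 + t) ^ (((|m| + σ : ℤ) : ℝ)) * ((1 - t) ^ ((l:ℝ) + α + 1 / 2)) *
              (jacobiPn k ((l : ℝ) + α + 1 / 2) (((|m| + σ : ℤ) : ℝ)) t *
                jacobiPn k' ((l : ℝ) + α + 1 / 2) (((|m| + σ : ℤ) : ℝ)) t) := by
              rw [e1, e2, e3]
          _ = (1 - t) ^ ((l:ℝ) + α + 1 / 2) * (1 + t) ^ (((|m| + σ : ℤ) : ℝ)) *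
              (jacobiPn k ((l : ℝ) + α + 1 / 2) (((|m| + σ : ℤ) : ℝ)) t *
                jacobiPn k' ((l : ℝ) + α + 1 / 2) (((|m| + σ : ℤ) : ℝ)) t) := by ring
      by_cases hkk : k = k'
      · subst hkk
        simp only [hIGval, hIFval, eq_self_iff_true, and_self, if_true, Complex.ofReal_one,
          one_mul, mul_one]
        have hNApos : 0 < Nalpha α := Real.sqrt_pos.mpr (by positivity)
        have hNAC : ((Nalpha α : ℝ) : ℂ) ^ 2
            = 2 * (Real.pi : ℂ) / ((((2:ℝ) ^ (2 + α + 1 / 2) : ℝ)) : ℂ) := by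
          rw [← Complex.ofReal_pow, hNA2]
          push_cast
          ring
        have h2ne : ((((2:ℝ) ^ (2 + α + 1 / 2) : ℝ)) : ℂ) ≠ 0 := by exact_mod_cast hc0.ne'
        have hNAne : ((Nalpha α : ℝ) : ℂ) ≠ 0 := by exact_mod_cast hNApos.ne'
        have hpine : (Real.pi : ℂ) ≠ 0 := by exact_mod_cast hπ.ne'
        push_cast
        rw [hNAC]
        field_simp
        exact div_self (by exact_mod_cast (Real.rpow_pos_of_pos two_pos
          ((2 * (2 + α) + 1) / 2)).ne')
      · simp [hIGval, hIFval, hkk]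
    · simp [hIGval, hll]
  · simp [hmm]
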